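/- Let F ∈ ℂ[x0,...,x_{2m+1}] be homogeneous of degree d and suppose the hypersurface X = {F = 0} is smooth (i.e. F and its partial derivatives have no common projective zero). Let ω be a contact 1-form on ℂ^{2m+2} with constant coefficients contraction, ω = i_R σ with σ a nondegenerate constant alternating 2-form, so that ω vanishes nowhere on ℂ^{2m+2}∖{0}. If Z ⊂ X is an irreducible projective subvariety of positive dimension along which dF restricted to T X pulls back proportionally to ω, say dF|_Z = s·ω|_Z with s a homogeneous function of degree d-2 on Z, and d > 2, then s has a zero on Z, and X is singular at that zero — a contradiction. Hence the zero locus of the restriction of ω to a smooth hypersurface of degree d ≥ 3 in P^{2m+1} is zero-dimensional. -/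

import Mathlib

open MvPolynomial Finset

variable {N : ℕ}



lemma deg_of_mem_support {F : MvPolynomial (Fin N) ℂ} {n : ℕ} (hF : F.IsHomogeneous n)
    {α : Fin N →₀ ℕ} (hα : α ∈ F.support) : α.degree = n := by
  rw [Finsupp.degree_eq_weight_one]
  exact hF (mem_support_iff.mp hα)

lemma deg_univ (α : Fin N →₀ ℕ) : α.degree = ∑ j, α j := by
  rw [Finsupp.degree]
  exact Finset.sum_subset (Finset.subset_univ _) (by intro x _ hx; simpa using hx)

lemma aux_eval_smul {F : MvPolynomial (Fin N) ℂ} {n : ℕ} (hF : F.IsHomogeneous n)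
    (t : ℂ) (x : Fin N → ℂ) : eval (t • x) F = t ^ n * eval x F := by
  rw [eval_eq, eval_eq, Finset.mul_sum]
  apply Finset.sum_congr rfl
  intro α hα
  have hdeg : ∑ i ∈ α.support, α i = n := deg_of_mem_support hF hα
  calc coeff α F * ∏ i ∈ α.support, (t • x) i ^ α i
      = coeff α F * ((∏ i ∈ α.support, t ^ α i) * ∏ i ∈ α.support, x i ^ α i) := by
        rw [← Finset.prod_mul_distrib]; simp [mul_pow]
    _ = t ^ n * (coeff α F * ∏ i ∈ α.support, x i ^ α i) := by
        rw [Finset.prod_pow_eq_pow_sum, hdeg]; ring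


lemma aux_pderiv_homog {F : MvPolynomial (Fin N) ℂ} {n : ℕ} (hF : F.IsHomogeneous n)
    (i : Fin N) : (pderiv i F).IsHomogeneous (n - 1) := by
  have : pderiv i F = ∑ α ∈ F.support, monomial (α - Finsupp.single i 1) (coeff α F * α i) := by
    conv_lhs => rw [F.as_sum]
    rw [map_sum]
    exact Finset.sum_congr rfl fun α _ => pderiv_monomial
  rw [this]
  apply IsHomogeneous.sum
  intro α hα
  rcases Nat.eq_zero_or_pos (α i) with h0 | h1
  · rw [h0]; simp only [Nat.cast_zero, mul_zero, map_zero]; exact isHomogeneous_zero _ _ _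
  · apply isHomogeneous_monomial
    have hdeg : α.degree = n := by
      rw [Finsupp.degree_eq_weight_one]; exact hF (mem_support_iff.mp hα)
    rw [deg_univ] at hdeg ⊢
    have hai : ∀ j, ((α - Finsupp.single i 1 : Fin N →₀ ℕ)) j = α j - (Finsupp.single i 1) j :=
      fun j => Finsupp.tsub_apply α (Finsupp.single i 1) j
    have hsplit : ∀ (β : Fin N →₀ ℕ), ∑ j, β j = β i + ∑ j ∈ univ.erase i, β j := by
      intro β
      rw [← Finset.add_sum_erase _ _ (mem_univ i)]
    rw [hsplit]
    simp only [hai]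
    have heq : ∀ j ∈ univ.erase i, α j - (Finsupp.single i 1) j = α j := by
      intro j hj
      rw [Finsupp.single_apply, if_neg (by simpa using (mem_erase.mp hj).1.symm)]
      omega
    rw [Finset.sum_congr rfl heq, Finsupp.single_apply, if_pos rfl]
    have h2 : α i + ∑ j ∈ univ.erase i, α j = n := by rw [← hsplit α]; exact hdeg
    set S := ∑ j ∈ univ.erase i, α j with hS
    omega


lemma aux_euler {F : MvPolynomial (Fin N) ℂ} {n : ℕ} (hF : F.IsHomogeneous n) (x : Fin N → ℂ) :
    (n : ℂ) * eval x F = ∑ i, x i * eval x (pderiv i F) := by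
  have hpd : ∀ i : Fin N, pderiv i F
      = ∑ α ∈ F.support, monomial (α - Finsupp.single i 1) (coeff α F * α i) := by
    intro i
    conv_lhs => rw [F.as_sum]
    rw [map_sum]
    exact Finset.sum_congr rfl fun α _ => pderiv_monomial
  have hRHS : ∀ i : Fin N, x i * eval x (pderiv i F)
      = ∑ α ∈ F.support, x i * ((coeff α F * α i) * ∏ j, x j ^ ((α - Finsupp.single i 1 : Fin N →₀ ℕ) j)) := by
    intro i
    rw [hpd i, map_sum, Finset.mul_sum]
    apply Finset.sum_congr rfl
    intro α _
    rw [eval_monomial, Finsupp.prod_pow]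
  rw [Finset.sum_congr rfl (fun i _ => hRHS i), Finset.sum_comm, eval_eq', Finset.mul_sum]
  apply Finset.sum_congr rfl
  intro α hα
  have hdeg : ∑ j, α j = n := by rw [← deg_univ]; exact deg_of_mem_support hF hα
  have key : ∀ i : Fin N, x i * ((coeff α F * α i) * ∏ j, x j ^ ((α - Finsupp.single i 1 : Fin N →₀ ℕ) j))
      = (α i : ℂ) * (coeff α F * ∏ j, x j ^ α j) := by
    intro i
    rcases Nat.eq_zero_or_pos (α i) with h0 | h1
    · rw [h0]; push_cast; ring
    · have e1 : ((α - Finsupp.single i 1 : Fin N →₀ ℕ)) i = α i - 1 := by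
        rw [Finsupp.tsub_apply, Finsupp.single_apply, if_pos rfl]
      have e2 : ∀ j ∈ univ.erase i, x j ^ ((α - Finsupp.single i 1 : Fin N →₀ ℕ) j) = x j ^ α j := by
        intro j hj
        rw [Finsupp.tsub_apply, Finsupp.single_apply,
          if_neg (by simpa using (mem_erase.mp hj).1.symm), Nat.sub_zero]
      rw [← Finset.mul_prod_erase univ _ (mem_univ i), e1, Finset.prod_congr rfl e2,
        ← Finset.mul_prod_erase univ (fun j => x j ^ α j) (mem_univ i)]
      have e3 : x i * x i ^ (α i - 1) = x i ^ α i := by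
        conv_rhs => rw [show α i = (α i - 1) + 1 by omega]
        rw [pow_succ]; ring
      calc x i * ((coeff α F * α i) * (x i ^ (α i - 1) * ∏ j ∈ univ.erase i, x j ^ α j))
          = (α i : ℂ) * (coeff α F * ((x i * x i ^ (α i - 1)) * ∏ j ∈ univ.erase i, x j ^ α j)) := by ring
        _ = (α i : ℂ) * (coeff α F * (x i ^ α i * ∏ j ∈ univ.erase i, x j ^ α j)) := by rw [e3]
  rw [Finset.sum_congr rfl (fun i _ => key i), ← Finset.sum_mul]
  congr 1
  rw [← hdeg]
  push_cast
  rfl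


lemma aux_hc_mul {c h : MvPolynomial (Fin N) ℂ} {e D : ℕ} (hh : h.IsHomogeneous e) (hD : e ≤ D) :
    homogeneousComponent D (c * h) = homogeneousComponent (D - e) c * h := by
  conv_lhs => rw [← sum_homogeneousComponent c, Finset.sum_mul, map_sum]
  have hterm : ∀ k, homogeneousComponent D (homogeneousComponent k c * h)
      = if k = D - e then homogeneousComponent k c * h else 0 := by
    intro k
    have hmem : homogeneousComponent k c * h ∈ homogeneousSubmodule (Fin N) ℂ (k + e) :=
      (mem_homogeneousSubmodule _ _).mpr ((homogeneousComponent_isHomogeneous k c).mul hh)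
    rw [homogeneousComponent_of_mem hmem]
    exact if_congr (by omega) rfl rfl
  rw [Finset.sum_congr rfl (fun k _ => hterm k),
    Finset.sum_ite_eq' (range (c.totalDegree + 1)) (D - e) (fun k => homogeneousComponent k c * h)]
  by_cases hmem : D - e ∈ range (c.totalDegree + 1)
  · rw [if_pos hmem]
  · rw [if_neg hmem]
    rw [homogeneousComponent_eq_zero (φ := c) (n := D - e) (by simp at hmem; omega), zero_mul]


noncomputable def evalMapZ {N : ℕ} (Z : Set (Fin N → ℂ)) :
    MvPolynomial (Fin N) ℂ →ₗ[ℂ] (Z → ℂ) where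
  toFun P z := MvPolynomial.eval z.1 P
  map_add' P Q := by funext z; simp
  map_smul' c P := by funext z; simp

@[simp] lemma evalMapZ_apply {N : ℕ} (Z : Set (Fin N → ℂ)) (P : MvPolynomial (Fin N) ℂ)
    (z : Z) : evalMapZ Z P z = MvPolynomial.eval z.1 P := rfl

def resMapZ {α : Type*} {Z : Set α} {T : Finset α} (hT : ↑T ⊆ Z) : (Z → ℂ) →ₗ[ℂ] (T → ℂ) where
  toFun f t := f ⟨t.1, hT t.2⟩
  map_add' _ _ := rfl
  map_smul' _ _ := rfl

@[simp] lemma resMapZ_apply {α : Type*} {Z : Set α} {T : Finset α} (hT : ↑T ⊆ Z)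
    (f : Z → ℂ) (t : T) : resMapZ hT f t = f ⟨t.1, hT t.2⟩ := rfl

lemma aux_Z_finite {d : ℕ} (hd : 3 ≤ d) (hN : 0 < N)
    (F : MvPolynomial (Fin N) ℂ) (hF : F.IsHomogeneous d)
    (hsm : ∀ x : Fin N → ℂ, x ≠ 0 → eval x F = 0 → ∃ i, eval x (pderiv i F) ≠ 0)
    (lam : Matrix (Fin N) (Fin N) ℂ) :
    {y : Fin N → ℂ | ∀ i, eval y (pderiv i F) = ∑ j, lam i j * y j}.Finite := by
  classical
  set Z := {y : Fin N → ℂ | ∀ i, eval y (pderiv i F) = ∑ j, lam i j * y j} with hZ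
  set h : Fin N → MvPolynomial (Fin N) ℂ := fun i => pderiv i F with hh_def
  have hh : ∀ i, (h i).IsHomogeneous (d - 1) := fun i => aux_pderiv_homog hF i
  set I := Ideal.span (Set.range h) with hI
  -- zero locus of the ideal of partials is {0}
  have hzl : ∀ x ∈ MvPolynomial.zeroLocus ℂ I, x = (0 : Fin N → ℂ) := by
    intro x hx
    by_contra hx0
    have hvan : ∀ i, eval x (h i) = 0 := fun i =>
      hx (h i) (Ideal.subset_span (Set.mem_range_self i))
    have hFx : eval x F = 0 := by
      have he := aux_euler hF x
      rw [Finset.sum_congr rfl (fun i _ => by rw [hvan i, mul_zero])] at he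
      simp only [Finset.sum_const_zero] at he
      have hd0 : (d : ℂ) ≠ 0 := by
        simp only [ne_eq, Nat.cast_eq_zero]; omega
      exact (mul_eq_zero.mp he).resolve_left hd0
    obtain ⟨i, hi⟩ := hsm x hx0 hFx
    exact hi (hvan i)
  -- powers of variables lie in I
  have hXrad : ∀ j, ∃ kj : ℕ, (X j : MvPolynomial (Fin N) ℂ) ^ kj ∈ I := by
    intro j
    have : (X j : MvPolynomial (Fin N) ℂ) ∈ I.radical := by
      rw [← vanishingIdeal_zeroLocus_eq_radical (K := ℂ), mem_vanishingIdeal_iff]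
      intro x hx
      rw [hzl x hx]
      simp
    exact this
  choose k0 hk0 using hXrad
  set k := (Finset.univ.sup k0) + 1 with hk
  have hXk : ∀ j, (X j : MvPolynomial (Fin N) ℂ) ^ k ∈ I := by
    intro j
    have hle : k0 j ≤ k := le_trans (Finset.le_sup (mem_univ j)) (Nat.le_succ _)
    have : (X j : MvPolynomial (Fin N) ℂ) ^ k
        = X j ^ (k - k0 j) * X j ^ (k0 j) := by rw [← pow_add]; congr 1; omega
    rw [this]
    exact Ideal.mul_mem_left _ _ (hk0 j)
  set K := N * k + d with hK
  have hKd : d ≤ K := by omega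
  -- monomials of high degree are in I
  have stepMon : ∀ α : Fin N →₀ ℕ, K ≤ α.degree → ∀ cc : ℂ, monomial α cc ∈ I := by
    intro α hα cc
    have hj : ∃ j, k ≤ α j := by
      by_contra hno
      push_neg at hno
      have : α.degree ≤ ∑ _j : Fin N, (k - 1) := by
        rw [deg_univ]
        exact Finset.sum_le_sum (fun j _ => by have := hno j; omega)
      simp only [Finset.sum_const, card_univ, Fintype.card_fin, smul_eq_mul] at this
      have hc : N * (k - 1) < K := by
        have : N * (k-1) ≤ N * k := Nat.mul_le_mul_left _ (by omega)
        omega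
      omega
    obtain ⟨j, hjk⟩ := hj
    have heq : monomial α cc
        = monomial (α - Finsupp.single j k) cc * (X j : MvPolynomial (Fin N) ℂ) ^ k := by
      rw [X_pow_eq_monomial, monomial_mul, mul_one,
        tsub_add_cancel_of_le (Finsupp.single_le_iff.mpr hjk)]
    rw [heq]
    exact Ideal.mul_mem_left _ _ (hXk j)
  -- homogeneous polys of high degree are in I
  have stepP : ∀ (D : ℕ), K ≤ D → ∀ P : MvPolynomial (Fin N) ℂ, P.IsHomogeneous D → P ∈ I := by
    intro D hD P hP
    rw [P.as_sum]
    apply Ideal.sum_mem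
    intro α hα
    exact stepMon α (by rw [deg_of_mem_support hP hα]; exact hD) _
  -- representation with homogeneous coefficients
  have stepRep : ∀ (D : ℕ), K ≤ D → ∀ P : MvPolynomial (Fin N) ℂ, P.IsHomogeneous D →
      ∃ c : Fin N → MvPolynomial (Fin N) ℂ,
        (∀ i, (c i).IsHomogeneous (D - (d - 1))) ∧ P = ∑ i, c i * h i := by
    intro D hD P hP
    obtain ⟨c0, hc0⟩ := Ideal.mem_span_range_iff_exists_fun.mp (stepP D hD P hP)
    refine ⟨fun i => homogeneousComponent (D - (d - 1)) (c0 i),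
      fun i => homogeneousComponent_isHomogeneous _ _, ?_⟩
    have hPD : homogeneousComponent D P = P := by
      rw [homogeneousComponent_of_mem ((mem_homogeneousSubmodule _ _).mpr hP), if_pos rfl]
    calc P = homogeneousComponent D P := hPD.symm
      _ = homogeneousComponent D (∑ i, c0 i * h i) := by rw [hc0]
      _ = ∑ i, homogeneousComponent D (c0 i * h i) := map_sum _ _ _
      _ = ∑ i, homogeneousComponent (D - (d - 1)) (c0 i) * h i :=
          Finset.sum_congr rfl fun i _ => aux_hc_mul (hh i) (by omega)
  -- the evaluation linear map to functions on Z
  set E : MvPolynomial (Fin N) ℂ →ₗ[ℂ] (Z → ℂ) := evalMapZ Z with hE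
  set Smon : Set (MvPolynomial (Fin N) ℂ) :=
    (fun α : Fin N →₀ ℕ => monomial α (1 : ℂ)) '' {α | α.degree < K} with hSmon
  have hSmonFin : Smon.Finite :=
    Set.Finite.image _ ((Finsupp.finite_of_degree_le K).subset (fun α (hα : α.degree < K) => show α.degree ≤ K from le_of_lt hα))
  set W : Submodule ℂ (Z → ℂ) := Submodule.span ℂ (E '' Smon) with hW
  haveI hWfd : FiniteDimensional ℂ W :=
    FiniteDimensional.span_of_finite ℂ (hSmonFin.image E)
  -- every homogeneous polynomial restricted to Z lies in W
  have claimHom : ∀ D : ℕ, ∀ P : MvPolynomial (Fin N) ℂ, P.IsHomogeneous D → E P ∈ W := by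
    intro D
    induction D using Nat.strong_induction_on with
    | _ D ih =>
      intro P hP
      by_cases hDK : D < K
      · -- low degree: combination of low-degree monomials
        have : E P = ∑ α ∈ P.support, coeff α P • E (monomial α 1) := by
          conv_lhs => rw [P.as_sum, map_sum]
          refine Finset.sum_congr rfl fun α _ => ?_
          rw [← map_smul]
          congr 1
          rw [smul_monomial, smul_eq_mul, mul_one]
        rw [this]
        apply Submodule.sum_mem
        intro α hα
        apply Submodule.smul_mem
        apply Submodule.subset_span
        exact ⟨monomial α 1, ⟨α, show α.degree < K by rw [deg_of_mem_support hP hα]; exact hDK, rfl⟩, rfl⟩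
      · push_neg at hDK
        obtain ⟨c, hc, hPc⟩ := stepRep D hDK P hP
        rw [hPc, map_sum]
        apply Submodule.sum_mem
        intro i _
        set ℓ : MvPolynomial (Fin N) ℂ := ∑ j, C (lam i j) * X j with hℓ
        have hℓhom : ℓ.IsHomogeneous 1 := by
          apply IsHomogeneous.sum
          intro j _
          exact isHomogeneous_C_mul_X _ _
        have hEeq : E (c i * h i) = E (c i * ℓ) := by
          funext z
          show eval z.1 (c i * h i) = eval z.1 (c i * ℓ)
          rw [eval_mul, eval_mul]
          congr 1
          rw [z.2 i, hℓ]
          simp [eval_sum]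
        rw [hEeq]
        exact ih ((D - (d - 1)) + 1) (by omega) _ (hc i |>.mul hℓhom)
  have claimAll : ∀ P : MvPolynomial (Fin N) ℂ, E P ∈ W := by
    intro P
    have hdecomp : E P = ∑ i ∈ Finset.range (P.totalDegree + 1), E (homogeneousComponent i P) := by
      conv_lhs => rw [← P.sum_homogeneousComponent]
      rw [map_sum]
    rw [hdecomp]
    exact Submodule.sum_mem _ fun i _ =>
      claimHom i _ (homogeneousComponent_isHomogeneous i P)
  -- conclude by dimension counting
  by_contra hinf
  replace hinf : Z.Infinite := hinf
  set M := Module.finrank ℂ W with hM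
  obtain ⟨T, hTZ, hTcard⟩ := hinf.exists_subset_card_eq (M + 1)
  set Res : (Z → ℂ) →ₗ[ℂ] (T → ℂ) := resMapZ hTZ with hRes
  -- interpolation: the standard basis vectors are in the image
  have hsep : ∀ t : Fin N → ℂ, ∀ u : Fin N → ℂ, u ≠ t →
      ∃ q : MvPolynomial (Fin N) ℂ, eval u q = 0 ∧ eval t q ≠ 0 := by
    intro t u hut
    obtain ⟨j, hj⟩ := Function.ne_iff.mp hut
    exact ⟨X j - C (u j), by simp, by simpa [sub_ne_zero] using (Ne.symm hj)⟩
  have hbasis : ∀ t : T, ∃ P : MvPolynomial (Fin N) ℂ, Res (E P) = (Pi.single t (1:ℂ) : T → ℂ) := by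
    intro t
    set P0 : MvPolynomial (Fin N) ℂ :=
      ∏ u ∈ T.erase t.1, if hu : u ≠ t.1 then Classical.choose (hsep t.1 u hu) else 1 with hP0
    have hev0 : ∀ u ∈ T.erase t.1, eval u P0 = 0 := by
      intro u hu
      have hune : u ≠ t.1 := (Finset.mem_erase.mp hu).1
      rw [hP0, map_prod]
      apply Finset.prod_eq_zero hu
      rw [dif_pos hune]
      exact (Classical.choose_spec (hsep t.1 u hune)).1
    have hevt : eval t.1 P0 ≠ 0 := by
      rw [hP0, map_prod]
      apply Finset.prod_ne_zero_iff.mpr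
      intro u hu
      have hune : u ≠ t.1 := (Finset.mem_erase.mp hu).1
      rw [dif_pos hune]
      exact (Classical.choose_spec (hsep t.1 u hune)).2
    refine ⟨C (eval t.1 P0)⁻¹ * P0, ?_⟩
    funext u
    rw [hRes, hE, resMapZ_apply, evalMapZ_apply, eval_mul, eval_C]
    by_cases hut : u = t
    · rw [hut, Pi.single_eq_same, inv_mul_cancel₀ hevt]
    · rw [Pi.single_eq_of_ne hut]
      have : (u : Fin N → ℂ) ∈ T.erase t.1 := by
        refine Finset.mem_erase.mpr ⟨?_, u.2⟩
        intro hcon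
        exact hut (Subtype.ext hcon)
      rw [hev0 _ this, mul_zero]
  -- the image of W under Res is everything
  have htop : W.map Res = ⊤ := by
    rw [Submodule.eq_top_iff']
    intro v
    have hv : v = ∑ t : T, v t • (Pi.single t (1 : ℂ) : T → ℂ) := by
      funext u
      rw [Finset.sum_apply]
      rw [show (v : T → ℂ) u = ∑ t : T, if t = u then v t else 0 by
        rw [Finset.sum_ite_eq' Finset.univ u v, if_pos (mem_univ u)]]
      refine Finset.sum_congr rfl fun t _ => ?_
      by_cases htu : t = u
      · subst htu; rw [if_pos rfl, Pi.smul_apply, Pi.single_eq_same, smul_eq_mul, mul_one]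
      · rw [if_neg htu, Pi.smul_apply, Pi.single_eq_of_ne (by exact fun hc => htu (hc ▸ rfl)), smul_eq_mul, mul_zero]
    rw [hv]
    apply Submodule.sum_mem
    intro t _
    apply Submodule.smul_mem
    obtain ⟨P, hP⟩ := hbasis t
    exact ⟨E P, claimAll P, hP⟩
  have h1 : Module.finrank ℂ (W.map Res) = M + 1 := by
    rw [htop, finrank_top, Module.finrank_pi, Fintype.card_coe, hTcard]
  have h2 : Module.finrank ℂ (W.map Res) ≤ M := Submodule.finrank_map_le Res W
  omega



/-- Let `X = {F = 0} ⊂ P^{2m+1}` be a smooth hypersurface of degree `d ≥ 3` and let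
`ω = i_R σ` be the contact form of a constant symplectic form `σ` given by an invertible
skew-symmetric matrix `lam`. Then the zero locus of the restriction of `ω` to `X`
(the points of `X` where `ω` is proportional to `dF`) is zero-dimensional, i.e. finite
in projective space. -/
theorem stmt15 (m d : ℕ) (hm : 1 ≤ m) (hd : 3 ≤ d)
    (F : MvPolynomial (Fin (2*m+2)) ℂ) (hF : F.IsHomogeneous d)
    (hsm : ∀ x : Fin (2*m+2) → ℂ, x ≠ 0 → MvPolynomial.eval x F = 0 →
        ∃ i, MvPolynomial.eval x (MvPolynomial.pderiv i F) ≠ 0)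
    (lam : Matrix (Fin (2*m+2)) (Fin (2*m+2)) ℂ)
    (hskew : lam.transpose = -lam) (hnd : IsUnit lam.det) :
    {p : Projectivization ℂ (Fin (2*m+2) → ℂ) |
        MvPolynomial.eval p.rep F = 0 ∧
        ∃ s : ℂ, ∀ i, (∑ j, lam i j * p.rep j) =
          s * MvPolynomial.eval p.rep (MvPolynomial.pderiv i F)}.Finite := by
  classical
  have hZfin := aux_Z_finite (N := 2*m+2) hd (by omega) F hF hsm lam
  set Z := {y : Fin (2*m+2) → ℂ | ∀ i, eval y (pderiv i F) = ∑ j, lam i j * y j} with hZ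
  have hone : (fun _ : Fin (2*m+2) => (1:ℂ)) ≠ 0 := by
    intro hc
    have := congrFun hc 0
    simp at this
  set f : (Fin (2*m+2) → ℂ) → Projectivization ℂ (Fin (2*m+2) → ℂ) :=
    fun y => if hy : y ≠ 0 then Projectivization.mk ℂ y hy
      else Projectivization.mk ℂ (fun _ => 1) hone with hf
  apply Set.Finite.subset (hZfin.image f)
  intro p hp
  obtain ⟨hpF, s, hs⟩ := hp
  have hx : p.rep ≠ 0 := Projectivization.rep_nonzero p
  have hs0 : s ≠ 0 := by
    intro hs0
    apply hx
    have hmv : lam.mulVec p.rep = 0 := by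
      funext i
      have := hs i
      rw [hs0, zero_mul] at this
      simpa [Matrix.mulVec, dotProduct] using this
    calc p.rep = (1 : Matrix _ _ ℂ).mulVec p.rep := by rw [Matrix.one_mulVec]
      _ = (lam⁻¹ * lam).mulVec p.rep := by rw [Matrix.nonsing_inv_mul lam hnd]
      _ = lam⁻¹.mulVec (lam.mulVec p.rep) := by rw [Matrix.mulVec_mulVec]
      _ = 0 := by rw [hmv, Matrix.mulVec_zero]
  obtain ⟨t, ht⟩ := IsAlgClosed.exists_pow_nat_eq s (n := d - 2) (by omega)
  have ht0 : t ≠ 0 := by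
    intro hc
    apply hs0
    rw [← ht, hc, zero_pow (by omega)]
  have hy0 : t • p.rep ≠ 0 := smul_ne_zero ht0 hx
  refine ⟨t • p.rep, ?_, ?_⟩
  · intro i
    rw [aux_eval_smul (aux_pderiv_homog hF i) t p.rep]
    have hrhs : ∑ j, lam i j * (t • p.rep) j = t * (s * eval p.rep (pderiv i F)) := by
      rw [← hs i, Finset.mul_sum]
      refine Finset.sum_congr rfl fun j _ => ?_
      simp [Pi.smul_apply, smul_eq_mul]
      ring
    rw [hrhs, ← ht]
    rw [show d - 1 = (d - 2) + 1 by omega, pow_succ]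
    ring
  · rw [hf]
    simp only [dif_pos hy0]
    rw [show Projectivization.mk ℂ (t • p.rep) hy0 = Projectivization.mk ℂ p.rep hx from
      (Projectivization.mk_eq_mk_iff ℂ _ _ _ _).mpr ⟨Units.mk0 t ht0, rfl⟩]
    exact p.mk_rep
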